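/- Let M = (m_ij) ∈ SL(3,ℤ) have a real eigenvalue α > 1 and two non-real complex eigenvalues β and its conjugate. Let G_M be the abstract group with presentation: generators g₀, g₁, g₂, g₃ and relations gᵢgⱼ = gⱼgᵢ for 1 ≤ i, j ≤ 3 and g₀gᵢg₀⁻¹ = g₁^{m_{i1}} g₂^{m_{i2}} g₃^{m_{i3}} for i = 1, 2, 3. Then: (1) the center of G_M is trivial; (2) Γ_{G_M} equals the subgroup generated by g₁, g₂, g₃, and this subgroup is free abelian of rank 3; (3) the quotient G_M/Γ_{G_M} is infinite cyclic generated by the class of g₀. In particular G_M is not isomorphic to any group with infinite cyclic center, and not isomorphic to any group G with Γ_G non-abelian. -/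

import Mathlib

open Polynomial

/-- The relations of the fundamental group `G_M` of an Inoue surface of type `S⁰`:
generators `g₀,g₁,g₂,g₃` (indexed by `Fin 4`), relations `gᵢgⱼ = gⱼgᵢ` for
`1 ≤ i,j ≤ 3` and `g₀gᵢg₀⁻¹ = g₁^{m_{i1}} g₂^{m_{i2}} g₃^{m_{i3}}` for `i = 1,2,3`. -/
def gMRels (M : Matrix (Fin 3) (Fin 3) ℤ) : Set (FreeGroup (Fin 4)) :=
  { FreeGroup.of 1 * FreeGroup.of 2 * (FreeGroup.of 1)⁻¹ * (FreeGroup.of 2)⁻¹,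
    FreeGroup.of 1 * FreeGroup.of 3 * (FreeGroup.of 1)⁻¹ * (FreeGroup.of 3)⁻¹,
    FreeGroup.of 2 * FreeGroup.of 3 * (FreeGroup.of 2)⁻¹ * (FreeGroup.of 3)⁻¹,
    FreeGroup.of 0 * FreeGroup.of 1 * (FreeGroup.of 0)⁻¹ *
      ((FreeGroup.of 1) ^ M 0 0 * (FreeGroup.of 2) ^ M 0 1 * (FreeGroup.of 3) ^ M 0 2)⁻¹,
    FreeGroup.of 0 * FreeGroup.of 2 * (FreeGroup.of 0)⁻¹ *
      ((FreeGroup.of 1) ^ M 1 0 * (FreeGroup.of 2) ^ M 1 1 * (FreeGroup.of 3) ^ M 1 2)⁻¹,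
    FreeGroup.of 0 * FreeGroup.of 3 * (FreeGroup.of 0)⁻¹ *
      ((FreeGroup.of 1) ^ M 2 0 * (FreeGroup.of 2) ^ M 2 1 * (FreeGroup.of 3) ^ M 2 2)⁻¹ }

/-- The group `G_M`. -/
abbrev GM (M : Matrix (Fin 3) (Fin 3) ℤ) := PresentedGroup (gMRels M)

/-- For a group `G`, `GammaSub G` is the normal subgroup
`Γ_G = {g ∈ G : g mod [G,G] is of finite order}`. -/
def GammaSub (G : Type*) [Group G] : Subgroup G :=
  Subgroup.comap (Abelianization.of : G →* Abelianization G)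
    (CommGroup.torsion (Abelianization G))

instance GammaSub.normal (G : Type*) [Group G] : (GammaSub G).Normal :=
  Subgroup.Normal.comap inferInstance _

namespace Stmt19
open Matrix

/-- The eigenvalue condition. -/
abbrev EigCond (M : Matrix (Fin 3) (Fin 3) ℤ) : Prop :=
  ∃ (α : ℝ) (β : ℂ), 1 < α ∧ β.im ≠ 0 ∧
    (M.map (Int.cast : ℤ → ℂ)).charpoly =
      (X - C (α : ℂ)) * (X - C β) * (X - C (starRingEnd ℂ β))

variable (M : Matrix (Fin 3) (Fin 3) ℤ)

lemma eval_charpoly (x : ℤ) :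
    ((M.map (Int.cast : ℤ → ℂ)).charpoly).eval (x : ℂ) =
      (Matrix.scalar (Fin 3) (x : ℂ) - M.map (Int.cast : ℤ → ℂ)).det := by
  rw [Matrix.charpoly, _root_.eval_det, Matrix.matPolyEquiv_charmatrix]
  simp

lemma hyp_ne (hα : ∃ (α : ℝ) (β : ℂ), 1 < α ∧ β.im ≠ 0 ∧
      (M.map (Int.cast : ℤ → ℂ)).charpoly =
        (X - C (α : ℂ)) * (X - C β) * (X - C (starRingEnd ℂ β))) :
    (M - 1).det ≠ 0 := by
  obtain ⟨α, β, hα1, hβ, hfac⟩ := hα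
  have h1 : ((M.map (Int.cast : ℤ → ℂ)).charpoly).eval (1 : ℂ) ≠ 0 := by
    rw [hfac]
    simp only [eval_mul, eval_sub, eval_X, eval_C, mul_ne_zero_iff]
    refine ⟨⟨?_, ?_⟩, ?_⟩
    · simp only [sub_ne_zero]
      intro h
      rw [show (1 : ℂ) = ((1 : ℝ) : ℂ) by norm_num] at h
      exact absurd (Complex.ofReal_inj.mp h).symm (by linarith)
    · simp only [sub_ne_zero]
      intro h
      apply hβ; rw [← h]; simp
    · simp only [sub_ne_zero]
      intro h
      apply hβ
      have := congrArg Complex.im h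
      simp at this
      linarith
  intro hdet
  apply h1
  have := eval_charpoly M 1
  rw [show ((1:ℤ):ℂ) = (1:ℂ) by norm_num] at this
  rw [this]
  have : Matrix.scalar (Fin 3) ((1:ℤ) : ℂ) - M.map (Int.cast : ℤ → ℂ)
      = (1 - M).map (Int.cast : ℤ → ℂ) := by
    ext i j
    by_cases h : i = j <;>
      simp [h, Matrix.scalar_apply, Matrix.one_apply, Matrix.sub_apply]
  rw [show ((1:ℤ):ℂ) = (1:ℂ) by norm_num] at this
  rw [this]
  rw [show ((1 - M).map (Int.cast : ℤ → ℂ)) = (Int.castRingHom ℂ).mapMatrix (1 - M) from rfl,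
    ← RingHom.map_det]
  have : (1 - M).det = - (M - 1).det := by
    have : (1 - M) = -(M - 1) := (neg_sub _ _).symm
    rw [this, Matrix.det_neg]
    simp
  rw [this, hdet]
  simp


/-- `M` as a unit of the matrix ring. -/
noncomputable def Mu (hM : M.det = 1) : (Matrix (Fin 3) (Fin 3) ℤ)ˣ :=
  ((Matrix.isUnit_iff_isUnit_det M).mpr (by rw [hM]; exact isUnit_one)).unit

@[simp] lemma Mu_val (hM : M.det = 1) : ((Mu M hM : (Matrix (Fin 3) (Fin 3) ℤ)ˣ) : Matrix (Fin 3) (Fin 3) ℤ) = M :=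
  IsUnit.unit_spec _

lemma Mu_pow_ne_one (hM : M.det = 1)
    (hα : ∃ (α : ℝ) (β : ℂ), 1 < α ∧ β.im ≠ 0 ∧
      (M.map (Int.cast : ℤ → ℂ)).charpoly =
        (X - C (α : ℂ)) * (X - C β) * (X - C (starRingEnd ℂ β)))
    {n : ℤ} (hn : Mu M hM ^ n = 1) : n = 0 := by
  obtain ⟨α, β, hα1, hβ, hfac⟩ := hα
  by_contra h0
  -- reduce to a positive natural power
  have key : ∀ m : ℕ, 0 < m → Mu M hM ^ m ≠ 1 := by
    intro m hm hEq
    -- M ^ m = 1 as matrices over ℂ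
    have hmat : M ^ m = 1 := by
      have := congrArg (Units.val) hEq
      simpa [Mu_val] using this
    have hmatC : (M.map (Int.cast : ℤ → ℂ)) ^ m = 1 := by
      have : ((Int.castRingHom ℂ).mapMatrix (M ^ m) : Matrix (Fin 3) (Fin 3) ℂ)
          = (Int.castRingHom ℂ).mapMatrix (1 : Matrix (Fin 3) (Fin 3) ℤ) := by rw [hmat]
      simpa [map_pow] using this
    -- α is an eigenvalue
    have hdet : (Matrix.scalar (Fin 3) (α : ℂ) - M.map (Int.cast : ℤ → ℂ)).det = 0 := by
      have h := congrArg (Polynomial.eval ((α : ℝ) : ℂ)) hfac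
      rw [Matrix.charpoly, _root_.eval_det, Matrix.matPolyEquiv_charmatrix] at h
      simp only [eval_mul, eval_sub, eval_X, eval_C, sub_self, zero_mul, mul_zero] at h
      exact h
    obtain ⟨v, hv0, hv⟩ := (Matrix.exists_mulVec_eq_zero_iff).mpr hdet
    have heig : (M.map (Int.cast : ℤ → ℂ)).mulVec v = ((α : ℂ)) • v := by
      have h2 : (Matrix.scalar (Fin 3) (α : ℂ)).mulVec v - (M.map (Int.cast : ℤ → ℂ)).mulVec v = 0 := by
        rw [← Matrix.sub_mulVec, hv]
      have h3 := sub_eq_zero.mp h2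
      rw [← h3]
      ext i
      rw [show (Matrix.scalar (Fin 3) (α : ℂ)) = Matrix.diagonal (fun _ => (α:ℂ)) from rfl]
      simp [Matrix.mulVec_diagonal]
    have heign : ∀ k : ℕ, ((M.map (Int.cast : ℤ → ℂ)) ^ k).mulVec v = (((α : ℂ)) ^ k) • v := by
      intro k
      induction k with
      | zero => simp
      | succ k ih =>
        rw [pow_succ', ← Matrix.mulVec_mulVec, ih, Matrix.mulVec_smul, heig, smul_smul,
          ← pow_succ]
    have hv1 := heign m
    rw [hmatC, Matrix.one_mulVec] at hv1
    obtain ⟨i, hi⟩ := Function.ne_iff.mp hv0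
    have hC : ((α : ℂ)) ^ m = 1 := by
      have h4 := congrFun hv1 i
      simp only [Pi.smul_apply, smul_eq_mul] at h4
      have hvi : v i ≠ 0 := by simpa using hi
      have := mul_right_cancel₀ hvi (by rw [← h4, one_mul] : (1 : ℂ) * v i = (α:ℂ)^m * v i)
      exact this.symm
    have hR : (α : ℝ) ^ m = 1 := by
      have : (((α ^ m : ℝ)) : ℂ) = ((1 : ℝ) : ℂ) := by push_cast; simpa using hC
      exact_mod_cast this
    have hgt : (1 : ℝ) < α ^ m := one_lt_pow₀ hα1 hm.ne'
    linarith
  rcases Int.natAbs_eq n with h | h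
  · exact key n.natAbs (by omega) (by rw [← zpow_natCast, ← h, hn])
  · apply key n.natAbs (by omega)
    rw [← zpow_natCast]
    have : (n.natAbs : ℤ) = -n := by omega
    rw [this, _root_.zpow_neg, hn, inv_one]


section SDP

variable (hM : M.det = 1)

/-- right multiplication by `Mu ^ n` as an automorphism of `ℤ³` (multiplicative). -/
noncomputable def phiAux (n : ℤ) : MulAut (Multiplicative (Fin 3 → ℤ)) where
  toFun k := Multiplicative.ofAdd (Matrix.vecMul k.toAdd ((Mu M hM ^ n : (Matrix (Fin 3) (Fin 3) ℤ)ˣ) : Matrix (Fin 3) (Fin 3) ℤ))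
  invFun k := Multiplicative.ofAdd (Matrix.vecMul k.toAdd ((Mu M hM ^ (-n) : (Matrix (Fin 3) (Fin 3) ℤ)ˣ) : Matrix (Fin 3) (Fin 3) ℤ))
  left_inv k := by
    show Multiplicative.ofAdd ((Multiplicative.ofAdd _).toAdd ᵥ* _) = k
    rw [toAdd_ofAdd, Matrix.vecMul_vecMul, ← Units.val_mul, ← _root_.zpow_add,
      add_neg_cancel, zpow_zero, Units.val_one, Matrix.vecMul_one, ofAdd_toAdd]
  right_inv k := by
    show Multiplicative.ofAdd ((Multiplicative.ofAdd _).toAdd ᵥ* _) = k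
    rw [toAdd_ofAdd, Matrix.vecMul_vecMul, ← Units.val_mul, ← _root_.zpow_add,
      neg_add_cancel, zpow_zero, Units.val_one, Matrix.vecMul_one, ofAdd_toAdd]
  map_mul' a b := by
    show Multiplicative.ofAdd ((a * b).toAdd ᵥ* _) = _
    rw [show (a * b).toAdd = a.toAdd + b.toAdd from rfl, Matrix.add_vecMul]
    rfl

lemma phiAux_apply (n : ℤ) (v : Fin 3 → ℤ) :
    phiAux M hM n (Multiplicative.ofAdd v) =
      Multiplicative.ofAdd (Matrix.vecMul v ((Mu M hM ^ n : (Matrix (Fin 3) (Fin 3) ℤ)ˣ) : Matrix (Fin 3) (Fin 3) ℤ)) := rfl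

/-- the action of `ℤ` on `ℤ³` by powers of `M` (acting on row vectors). -/
noncomputable def phi : Multiplicative ℤ →* MulAut (Multiplicative (Fin 3 → ℤ)) where
  toFun n := phiAux M hM n.toAdd
  map_one' := by
    refine MulEquiv.ext fun k => ?_
    show Multiplicative.ofAdd (k.toAdd ᵥ* _) = k
    rw [show Multiplicative.toAdd (1 : Multiplicative ℤ) = 0 from rfl, zpow_zero, Units.val_one,
      Matrix.vecMul_one, ofAdd_toAdd]
  map_mul' a b := MulEquiv.ext fun k => by
    show Multiplicative.ofAdd (k.toAdd ᵥ* ((Mu M hM ^ (a.toAdd + b.toAdd) : (Matrix (Fin 3) (Fin 3) ℤ)ˣ) : Matrix (Fin 3) (Fin 3) ℤ))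
      = Multiplicative.ofAdd ((Multiplicative.ofAdd (k.toAdd ᵥ* ((Mu M hM ^ b.toAdd : (Matrix (Fin 3) (Fin 3) ℤ)ˣ) : Matrix (Fin 3) (Fin 3) ℤ))).toAdd ᵥ* ((Mu M hM ^ a.toAdd : (Matrix (Fin 3) (Fin 3) ℤ)ˣ) : Matrix (Fin 3) (Fin 3) ℤ))
    rw [toAdd_ofAdd, Matrix.vecMul_vecMul, ← Units.val_mul, ← _root_.zpow_add, add_comm]

/-- The concrete model: `ℤ³ ⋊ ℤ`. -/
abbrev Gsd := (Multiplicative (Fin 3 → ℤ)) ⋊[phi M hM] Multiplicative ℤ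

lemma phi_apply (n : ℤ) (v : Fin 3 → ℤ) :
    phi M hM (Multiplicative.ofAdd n) (Multiplicative.ofAdd v) =
      Multiplicative.ofAdd (Matrix.vecMul v ((Mu M hM ^ n : (Matrix (Fin 3) (Fin 3) ℤ)ˣ) : Matrix (Fin 3) (Fin 3) ℤ)) := rfl

open SemidirectProduct in
/-- images of the four generators in the concrete model. -/
noncomputable def gens : Fin 4 → Gsd M hM :=
  ![inr (Multiplicative.ofAdd 1),
    inl (Multiplicative.ofAdd (Pi.single 0 1)),
    inl (Multiplicative.ofAdd (Pi.single 1 1)),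
    inl (Multiplicative.ofAdd (Pi.single 2 1))]

lemma ofAdd_zpow (v : Fin 3 → ℤ) (m : ℤ) :
    (Multiplicative.ofAdd v) ^ m = Multiplicative.ofAdd (m • v) := rfl

lemma inl_zpow (v : Fin 3 → ℤ) (m : ℤ) :
    (SemidirectProduct.inl (Multiplicative.ofAdd v) : Gsd M hM) ^ m
      = SemidirectProduct.inl (Multiplicative.ofAdd (m • v)) := by
  rw [← map_zpow, ofAdd_zpow]

lemma inl_mul_eq (v w : Fin 3 → ℤ) :
    (SemidirectProduct.inl (Multiplicative.ofAdd v) : Gsd M hM) *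
      SemidirectProduct.inl (Multiplicative.ofAdd w)
      = SemidirectProduct.inl (Multiplicative.ofAdd (v + w)) := by
  rw [← _root_.map_mul]; rfl

lemma conj_inl (v : Fin 3 → ℤ) :
    SemidirectProduct.inr (Multiplicative.ofAdd (1:ℤ)) *
        SemidirectProduct.inl (Multiplicative.ofAdd v) *
        (SemidirectProduct.inr (Multiplicative.ofAdd (1:ℤ)) : Gsd M hM)⁻¹
      = SemidirectProduct.inl (Multiplicative.ofAdd (Matrix.vecMul v M)) := by
  rw [show (SemidirectProduct.inr (Multiplicative.ofAdd (1:ℤ)) : Gsd M hM)⁻¹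
      = SemidirectProduct.inr (Multiplicative.ofAdd (1:ℤ))⁻¹ from (map_inv _ _).symm,
    ← SemidirectProduct.inl_aut]
  congr 1
  rw [phi_apply, zpow_one, Mu_val]

lemma vec_decomp (w : Fin 3 → ℤ) :
    w 0 • Pi.single 0 1 + w 1 • Pi.single 1 1 + w 2 • Pi.single 2 (1:ℤ) = w := by
  funext j
  fin_cases j <;> simp [Pi.single_apply]

lemma hrels : ∀ r ∈ gMRels M, FreeGroup.lift (gens M hM) r = 1 := by
  intro r hr
  have hcomm : ∀ a b : Fin 3, FreeGroup.lift (gens M hM)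
      (FreeGroup.of a.succ * FreeGroup.of b.succ * (FreeGroup.of a.succ)⁻¹ *
        (FreeGroup.of b.succ)⁻¹) = 1 := by
    intro a b
    simp only [_root_.map_mul, map_inv, FreeGroup.lift_apply_of]
    have ha : gens M hM a.succ = SemidirectProduct.inl (Multiplicative.ofAdd (Pi.single a 1)) := by
      fin_cases a <;> rfl
    have hb : gens M hM b.succ = SemidirectProduct.inl (Multiplicative.ofAdd (Pi.single b 1)) := by
      fin_cases b <;> rfl
    rw [ha, hb]
    exact commutatorElement_eq_one_iff_mul_comm.mpr (by rw [inl_mul_eq, inl_mul_eq, add_comm])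
  have hconj : ∀ i : Fin 3, FreeGroup.lift (gens M hM)
      (FreeGroup.of 0 * FreeGroup.of i.succ * (FreeGroup.of 0)⁻¹ *
        ((FreeGroup.of 1) ^ M i 0 * (FreeGroup.of 2) ^ M i 1 * (FreeGroup.of 3) ^ M i 2)⁻¹) = 1 := by
    intro i
    simp only [_root_.map_mul, map_inv, map_zpow, FreeGroup.lift_apply_of]
    rw [mul_inv_eq_one]
    have h0 : gens M hM 0 = SemidirectProduct.inr (Multiplicative.ofAdd (1:ℤ)) := rfl
    have h1 : gens M hM 1 = SemidirectProduct.inl (Multiplicative.ofAdd (Pi.single 0 1)) := rfl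
    have h2 : gens M hM 2 = SemidirectProduct.inl (Multiplicative.ofAdd (Pi.single 1 1)) := rfl
    have h3 : gens M hM 3 = SemidirectProduct.inl (Multiplicative.ofAdd (Pi.single 2 1)) := rfl
    have hsucc : gens M hM i.succ = SemidirectProduct.inl (Multiplicative.ofAdd (Pi.single i 1)) := by
      fin_cases i <;> rfl
    rw [h0, h1, h2, h3, hsucc, conj_inl, inl_zpow, inl_zpow, inl_zpow, inl_mul_eq, inl_mul_eq]
    congr 1
    rw [Matrix.single_one_vecMul]
    exact (vec_decomp (M i)).symm
  simp only [gMRels, Set.mem_insert_iff, Set.mem_singleton_iff] at hr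
  rcases hr with hr | hr | hr | hr | hr | hr
  · rw [hr]; exact hcomm 0 1
  · rw [hr]; exact hcomm 0 2
  · rw [hr]; exact hcomm 1 2
  · rw [hr]; exact hconj 0
  · rw [hr]; exact hconj 1
  · rw [show r = _ from hr]; exact hconj 2

/-- the homomorphism from the presented group to the concrete model. -/
noncomputable def Φ : GM M →* Gsd M hM := PresentedGroup.toGroup (hrels M hM)

lemma Φ_of (i : Fin 4) : Φ M hM (PresentedGroup.of i) = gens M hM i :=
  PresentedGroup.toGroup.of _

lemma relator_one {r : FreeGroup (Fin 4)} (hr : r ∈ gMRels M) :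
    (PresentedGroup.mk (gMRels M) r : GM M) = 1 := by
  apply (QuotientGroup.eq_one_iff _).mpr
  exact Subgroup.subset_normalClosure hr

lemma comm12 : (PresentedGroup.of 1 : GM M) * PresentedGroup.of 2
    = PresentedGroup.of 2 * PresentedGroup.of 1 := by
  have h := relator_one M (Set.mem_insert _ _)
  simp only [_root_.map_mul, map_inv] at h
  exact commutatorElement_eq_one_iff_mul_comm.mp h

lemma comm13 : (PresentedGroup.of 1 : GM M) * PresentedGroup.of 3
    = PresentedGroup.of 3 * PresentedGroup.of 1 := by
  have h := relator_one M
    (Set.mem_insert_of_mem _ (Set.mem_insert _ _))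
  simp only [_root_.map_mul, map_inv] at h
  exact commutatorElement_eq_one_iff_mul_comm.mp h

lemma comm23 : (PresentedGroup.of 2 : GM M) * PresentedGroup.of 3
    = PresentedGroup.of 3 * PresentedGroup.of 2 := by
  have h := relator_one M
    (Set.mem_insert_of_mem _ (Set.mem_insert_of_mem _ (Set.mem_insert _ _)))
  simp only [_root_.map_mul, map_inv] at h
  exact commutatorElement_eq_one_iff_mul_comm.mp h

lemma conj_of_rel {a : Fin 4} {m0 m1 m2 : ℤ}
    (hmem : (FreeGroup.of 0 * FreeGroup.of a * (FreeGroup.of 0)⁻¹ *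
      ((FreeGroup.of 1) ^ m0 * (FreeGroup.of 2) ^ m1 * (FreeGroup.of 3) ^ m2)⁻¹) ∈ gMRels M) :
    (PresentedGroup.of 0 : GM M) * PresentedGroup.of a * (PresentedGroup.of 0)⁻¹
      = PresentedGroup.of 1 ^ m0 * PresentedGroup.of 2 ^ m1 * PresentedGroup.of 3 ^ m2 := by
  have h := relator_one M hmem
  simp only [_root_.map_mul, map_inv, map_zpow] at h
  exact mul_inv_eq_one.mp h

lemma conjRel (i : Fin 3) :
    (PresentedGroup.of 0 : GM M) * PresentedGroup.of i.succ * (PresentedGroup.of 0)⁻¹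
      = PresentedGroup.of 1 ^ M i 0 * PresentedGroup.of 2 ^ M i 1
          * PresentedGroup.of 3 ^ M i 2 := by
  fin_cases i
  · exact conj_of_rel M (Set.mem_insert_of_mem _ (Set.mem_insert_of_mem _
      (Set.mem_insert_of_mem _ (Set.mem_insert _ _))))
  · exact conj_of_rel M (Set.mem_insert_of_mem _ (Set.mem_insert_of_mem _
      (Set.mem_insert_of_mem _ (Set.mem_insert_of_mem _ (Set.mem_insert _ _)))))
  · exact conj_of_rel M (Set.mem_insert_of_mem _ (Set.mem_insert_of_mem _
      (Set.mem_insert_of_mem _ (Set.mem_insert_of_mem _ (Set.mem_insert_of_mem _ rfl)))))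

lemma zpow_shuffle {G : Type*} [Group G] {a b c : G} (hab : Commute a b) (hac : Commute a c)
    (hbc : Commute b c) (v w : Fin 3 → ℤ) :
    a ^ (v 0 + w 0) * b ^ (v 1 + w 1) * c ^ (v 2 + w 2)
      = (a ^ v 0 * b ^ v 1 * c ^ v 2) * (a ^ w 0 * b ^ w 1 * c ^ w 2) := by
  rw [_root_.zpow_add, _root_.zpow_add, _root_.zpow_add, (hab.zpow_zpow (w 0) (v 1)).mul_mul_mul_comm,
    ((hac.zpow_zpow (w 0) (v 2)).mul_left (hbc.zpow_zpow (w 1) (v 2))).mul_mul_mul_comm]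

/-- the homomorphism `ℤ³ →* G_M`, `v ↦ g₁^{v 0} g₂^{v 1} g₃^{v 2}`. -/
noncomputable def psiK : Multiplicative (Fin 3 → ℤ) →* GM M where
  toFun k := PresentedGroup.of 1 ^ (k.toAdd 0) * PresentedGroup.of 2 ^ (k.toAdd 1)
    * PresentedGroup.of 3 ^ (k.toAdd 2)
  map_one' := by
    show (PresentedGroup.of 1 : GM M) ^ ((0 : Fin 3 → ℤ) 0) * _ ^ ((0 : Fin 3 → ℤ) 1)
      * _ ^ ((0 : Fin 3 → ℤ) 2) = 1
    simp
  map_mul' a b := by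
    show PresentedGroup.of 1 ^ ((a.toAdd + b.toAdd) 0) * PresentedGroup.of 2 ^ ((a.toAdd + b.toAdd) 1)
      * PresentedGroup.of 3 ^ ((a.toAdd + b.toAdd) 2) = _
    simp only [Pi.add_apply]
    exact zpow_shuffle (comm12 M) (comm13 M) (comm23 M) a.toAdd b.toAdd

lemma psiK_apply (v : Fin 3 → ℤ) :
    psiK M (Multiplicative.ofAdd v) = PresentedGroup.of 1 ^ (v 0) * PresentedGroup.of 2 ^ (v 1)
      * PresentedGroup.of 3 ^ (v 2) := rfl

/-- the homomorphism `ℤ →* G_M`, `n ↦ g₀ ^ n`. -/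
noncomputable def psiH : Multiplicative ℤ →* GM M := zpowersHom _ (PresentedGroup.of 0)

lemma psiH_apply (n : ℤ) : psiH M (Multiplicative.ofAdd n) = (PresentedGroup.of 0 : GM M) ^ n := rfl

/-- conjugation by `g₀` realizes `v ↦ v M`. -/
lemma conj_psiK (v : Fin 3 → ℤ) :
    (PresentedGroup.of 0 : GM M) * psiK M (Multiplicative.ofAdd v) * (PresentedGroup.of 0)⁻¹
      = psiK M (Multiplicative.ofAdd (Matrix.vecMul v M)) := by
  have key : ∀ i : Fin 3, (PresentedGroup.of 0 : GM M) * PresentedGroup.of i.succ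
      * (PresentedGroup.of 0)⁻¹ = psiK M (Multiplicative.ofAdd (M i)) := by
    intro i
    rw [conjRel M i, psiK_apply]
  have conj_hom : ∀ x y : GM M, (PresentedGroup.of 0 : GM M) * (x * y) * (PresentedGroup.of 0)⁻¹
      = ((PresentedGroup.of 0 : GM M) * x * (PresentedGroup.of 0)⁻¹)
        * ((PresentedGroup.of 0 : GM M) * y * (PresentedGroup.of 0)⁻¹) := by
    intro x y; group
  have conj_zpow : ∀ (x : GM M) (m : ℤ), (PresentedGroup.of 0 : GM M) * (x ^ m) * (PresentedGroup.of 0)⁻¹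
      = ((PresentedGroup.of 0 : GM M) * x * (PresentedGroup.of 0)⁻¹) ^ m := by
    intro x m
    rw [show (PresentedGroup.of 0 : GM M) * (x ^ m) * (PresentedGroup.of 0)⁻¹
      = (MulAut.conj (PresentedGroup.of 0 : GM M)) (x ^ m) from rfl, map_zpow]
    rfl
  have e1 : (PresentedGroup.of (1 : Fin 4) : GM M) = PresentedGroup.of (Fin.succ 0) := rfl
  have e2 : (PresentedGroup.of (2 : Fin 4) : GM M) = PresentedGroup.of (Fin.succ 1) := rfl
  have e3 : (PresentedGroup.of (3 : Fin 4) : GM M) = PresentedGroup.of (Fin.succ 2) := rfl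
  have hsum : (Multiplicative.ofAdd (M 0)) ^ (v 0) * (Multiplicative.ofAdd (M 1)) ^ (v 1)
      * (Multiplicative.ofAdd (M 2)) ^ (v 2) = Multiplicative.ofAdd (Matrix.vecMul v M) := by
    rw [ofAdd_zpow, ofAdd_zpow, ofAdd_zpow, ← ofAdd_add, ← ofAdd_add]
    congr 1
    funext j
    simp [Matrix.vecMul, dotProduct, Fin.sum_univ_three]
  rw [psiK_apply, conj_hom, conj_hom, conj_zpow, conj_zpow, conj_zpow, e1, e2, e3,
    key 0, key 1, key 2, ← hsum, _root_.map_mul, _root_.map_mul, map_zpow, map_zpow, map_zpow]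

lemma conj_psiK_inv (u : Fin 3 → ℤ) :
    (PresentedGroup.of 0 : GM M)⁻¹ * psiK M (Multiplicative.ofAdd u) * PresentedGroup.of 0
      = psiK M (Multiplicative.ofAdd (Matrix.vecMul u
          (((Mu M hM)⁻¹ : (Matrix (Fin 3) (Fin 3) ℤ)ˣ) : Matrix (Fin 3) (Fin 3) ℤ))) := by
  have harg : Matrix.vecMul (Matrix.vecMul u (((Mu M hM)⁻¹ : (Matrix (Fin 3) (Fin 3) ℤ)ˣ) : Matrix (Fin 3) (Fin 3) ℤ)) M = u := by
    have h2 : (((Mu M hM)⁻¹ : (Matrix (Fin 3) (Fin 3) ℤ)ˣ) : Matrix (Fin 3) (Fin 3) ℤ) * M = 1 := by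
      have := Units.inv_mul (Mu M hM)
      rwa [Mu_val] at this
    rw [Matrix.vecMul_vecMul, h2, Matrix.vecMul_one]
  have h := conj_psiK M (Matrix.vecMul u (((Mu M hM)⁻¹ : (Matrix (Fin 3) (Fin 3) ℤ)ˣ) : Matrix (Fin 3) (Fin 3) ℤ))
  rw [harg] at h
  rw [← h]
  group

lemma conj_psiK_zpow (n : ℤ) (v : Fin 3 → ℤ) :
    (PresentedGroup.of 0 : GM M) ^ n * psiK M (Multiplicative.ofAdd v)
        * ((PresentedGroup.of 0 : GM M) ^ n)⁻¹
      = psiK M (Multiplicative.ofAdd (Matrix.vecMul v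
          ((Mu M hM ^ n : (Matrix (Fin 3) (Fin 3) ℤ)ˣ) : Matrix (Fin 3) (Fin 3) ℤ))) := by
  induction n using Int.induction_on with
  | zero => simp [Matrix.vecMul_one]
  | succ k ih =>
    have H : ∀ (x : GM M), (PresentedGroup.of 0 : GM M) ^ ((k:ℤ)+1) * x
        * ((PresentedGroup.of 0 : GM M) ^ ((k:ℤ)+1))⁻¹
        = PresentedGroup.of 0 * ((PresentedGroup.of 0 : GM M) ^ (k:ℤ) * x
            * ((PresentedGroup.of 0 : GM M) ^ (k:ℤ))⁻¹) * (PresentedGroup.of 0)⁻¹ := by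
      intro x; group
    rw [H, ih, conj_psiK, Matrix.vecMul_vecMul]
    have hmm : ((Mu M hM ^ (k:ℤ) : (Matrix (Fin 3) (Fin 3) ℤ)ˣ) : Matrix (Fin 3) (Fin 3) ℤ) * M
        = ((Mu M hM ^ ((k:ℤ)+1) : (Matrix (Fin 3) (Fin 3) ℤ)ˣ) : Matrix (Fin 3) (Fin 3) ℤ) := by
      have h3 := Units.val_mul (Mu M hM ^ (k:ℤ)) (Mu M hM)
      rw [Mu_val] at h3
      rw [← h3, ← _root_.zpow_add_one]
    rw [hmm]
  | pred k ih =>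
    have H : ∀ (x : GM M), (PresentedGroup.of 0 : GM M) ^ (-(k:ℤ)-1) * x
        * ((PresentedGroup.of 0 : GM M) ^ (-(k:ℤ)-1))⁻¹
        = (PresentedGroup.of 0)⁻¹ * ((PresentedGroup.of 0 : GM M) ^ (-(k:ℤ)) * x
            * ((PresentedGroup.of 0 : GM M) ^ (-(k:ℤ)))⁻¹) * PresentedGroup.of 0 := by
      intro x; group
    rw [H, ih, conj_psiK_inv M hM, Matrix.vecMul_vecMul]
    have hmm : ((Mu M hM ^ (-(k:ℤ)) : (Matrix (Fin 3) (Fin 3) ℤ)ˣ) : Matrix (Fin 3) (Fin 3) ℤ)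
          * (((Mu M hM)⁻¹ : (Matrix (Fin 3) (Fin 3) ℤ)ˣ) : Matrix (Fin 3) (Fin 3) ℤ)
        = ((Mu M hM ^ (-(k:ℤ)-1) : (Matrix (Fin 3) (Fin 3) ℤ)ˣ) : Matrix (Fin 3) (Fin 3) ℤ) := by
      rw [← Units.val_mul, ← _root_.zpow_sub_one]
    rw [hmm]

/-- the homomorphism from the concrete model to the presented group. -/
noncomputable def Psi : Gsd M hM →* GM M :=
  SemidirectProduct.lift (psiK M) (psiH M) (by
    intro g
    refine MonoidHom.ext fun k => ?_
    show psiK M (phi M hM g k) = (psiH M g) * psiK M k * (psiH M g)⁻¹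
    have hk : k = Multiplicative.ofAdd k.toAdd := rfl
    have hg : g = Multiplicative.ofAdd g.toAdd := rfl
    rw [hk, hg, phi_apply, psiH_apply, conj_psiK_zpow])

lemma Psi_inl (k : Multiplicative (Fin 3 → ℤ)) :
    Psi M hM (SemidirectProduct.inl k) = psiK M k := SemidirectProduct.lift_inl _ _ _ _

lemma Psi_inr (h : Multiplicative ℤ) :
    Psi M hM (SemidirectProduct.inr h) = psiH M h := SemidirectProduct.lift_inr _ _ _ _

lemma Phi_psiK (v : Fin 3 → ℤ) :
    Φ M hM (psiK M (Multiplicative.ofAdd v)) = SemidirectProduct.inl (Multiplicative.ofAdd v) := by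
  rw [psiK_apply, _root_.map_mul, _root_.map_mul, map_zpow, map_zpow, map_zpow,
    Φ_of, Φ_of, Φ_of]
  show (SemidirectProduct.inl (Multiplicative.ofAdd (Pi.single 0 1)) : Gsd M hM) ^ v 0 *
      SemidirectProduct.inl (Multiplicative.ofAdd (Pi.single 1 1)) ^ v 1 *
      SemidirectProduct.inl (Multiplicative.ofAdd (Pi.single 2 1)) ^ v 2 = _
  rw [inl_zpow, inl_zpow, inl_zpow, inl_mul_eq, inl_mul_eq, vec_decomp]

lemma Phi_Psi (x : Gsd M hM) : Φ M hM (Psi M hM x) = x := by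
  rw [← SemidirectProduct.inl_left_mul_inr_right x, _root_.map_mul, _root_.map_mul,
    Psi_inl, Psi_inr]
  have h1 : Φ M hM (psiK M x.left) = SemidirectProduct.inl x.left := by
    have : x.left = Multiplicative.ofAdd x.left.toAdd := rfl
    rw [this, Phi_psiK]
  have h2 : Φ M hM (psiH M x.right) = SemidirectProduct.inr x.right := by
    have : x.right = Multiplicative.ofAdd x.right.toAdd := rfl
    rw [this, psiH_apply, map_zpow, Φ_of]
    show (SemidirectProduct.inr (Multiplicative.ofAdd (1:ℤ)) : Gsd M hM) ^ x.right.toAdd = _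
    rw [← map_zpow]
    congr 1
    show Multiplicative.ofAdd (x.right.toAdd • (1:ℤ)) = _
    rw [smul_eq_mul, mul_one]
  rw [h1, h2]

lemma Psi_Phi (x : GM M) : Psi M hM (Φ M hM x) = x := by
  have : (Psi M hM).comp (Φ M hM) = MonoidHom.id (GM M) := by
    apply PresentedGroup.ext
    intro i
    show Psi M hM (Φ M hM (PresentedGroup.of i)) = PresentedGroup.of i
    rw [Φ_of]
    fin_cases i
    · show Psi M hM (SemidirectProduct.inr (Multiplicative.ofAdd (1:ℤ))) = _
      rw [Psi_inr, psiH_apply, zpow_one]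
      rfl
    · show Psi M hM (SemidirectProduct.inl (Multiplicative.ofAdd (Pi.single 0 1))) = _
      rw [Psi_inl, psiK_apply]
      simp [Pi.single_apply]
    · show Psi M hM (SemidirectProduct.inl (Multiplicative.ofAdd (Pi.single 1 1))) = _
      rw [Psi_inl, psiK_apply]
      simp [Pi.single_apply]
    · show Psi M hM (SemidirectProduct.inl (Multiplicative.ofAdd (Pi.single 2 1))) = _
      rw [Psi_inl, psiK_apply]
      simp [Pi.single_apply]
  exact DFunLike.congr_fun this x

end SDP

lemma vecMul_smul_one (d : ℤ) (v : Fin 3 → ℤ) :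
    Matrix.vecMul v (d • (1 : Matrix (Fin 3) (Fin 3) ℤ)) = d • v := by
  funext j
  simp [Matrix.vecMul, dotProduct, Matrix.smul_apply, Matrix.one_apply, mul_ite,
    Finset.sum_ite_eq', mul_comm]

lemma vecMul_cancel {A : Matrix (Fin 3) (Fin 3) ℤ} (hA : A.det ≠ 0) {v : Fin 3 → ℤ}
    (h : Matrix.vecMul v A = 0) : v = 0 := by
  have h2 := congrArg (fun w => Matrix.vecMul w A.adjugate) h
  simp only [Matrix.vecMul_vecMul, Matrix.zero_vecMul] at h2
  rw [Matrix.mul_adjugate, vecMul_smul_one] at h2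
  rcases smul_eq_zero.mp h2 with h3 | h3
  · exact absurd h3 hA
  · exact h3

lemma gammaSub_map {H₁ : Type*} {H₂ : Type*} [Group H₁] [Group H₂] (f : H₁ →* H₂) (y : H₁)
    (hy : y ∈ GammaSub H₁) : f y ∈ GammaSub H₂ := by
  have hy' : IsOfFinOrder (Abelianization.of y) := hy
  have h2 : IsOfFinOrder ((Abelianization.lift ((Abelianization.of).comp f))
      (Abelianization.of y)) := MonoidHom.isOfFinOrder _ hy'
  rw [Abelianization.lift_apply_of] at h2
  exact h2

lemma gamma_iff {G₁ G₂ : Type*} [Group G₁] [Group G₂] (e : G₁ ≃* G₂) (x : G₁) :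
    x ∈ GammaSub G₁ ↔ e x ∈ GammaSub G₂ := by
  constructor
  · exact gammaSub_map e.toMonoidHom x
  · intro h
    have := gammaSub_map e.symm.toMonoidHom (e x) h
    simpa using this

section Main

variable (hM : M.det = 1)

open SemidirectProduct
open scoped commutatorElement

lemma of_commutator_eq_one {G : Type*} [Group G] (a b : G) :
    Abelianization.of ⁅a, b⁆ = (1 : Abelianization G) := by
  rw [map_commutatorElement]
  exact commutatorElement_eq_one_iff_mul_comm.mpr (mul_comm _ _)

lemma inl_sub_commutator (w : Fin 3 → ℤ) :
    (SemidirectProduct.inl (Multiplicative.ofAdd (Matrix.vecMul w (M - 1))) : Gsd M hM)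
      = ⁅(SemidirectProduct.inr (Multiplicative.ofAdd (1:ℤ)) : Gsd M hM),
          SemidirectProduct.inl (Multiplicative.ofAdd w)⁆ := by
  rw [commutatorElement_def]
  have h1 : (SemidirectProduct.inr (Multiplicative.ofAdd (1:ℤ)) : Gsd M hM) *
      SemidirectProduct.inl (Multiplicative.ofAdd w) *
      (SemidirectProduct.inr (Multiplicative.ofAdd (1:ℤ)))⁻¹
      = SemidirectProduct.inl (Multiplicative.ofAdd (Matrix.vecMul w M)) := conj_inl M hM w
  rw [h1, ← _root_.map_inv, show (Multiplicative.ofAdd w)⁻¹ = Multiplicative.ofAdd (-w) from rfl,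
    inl_mul_eq]
  congr 1
  rw [Matrix.vecMul_sub, Matrix.vecMul_one, sub_eq_add_neg]

lemma inl_mem_gamma (hα : EigCond M) (v : Fin 3 → ℤ) :
    (SemidirectProduct.inl (Multiplicative.ofAdd v) : Gsd M hM) ∈ GammaSub (Gsd M hM) := by
  set d : ℤ := (M - 1).det with hd
  have hd0 : d ≠ 0 := hyp_ne M hα
  have key : Abelianization.of
      ((SemidirectProduct.inl (Multiplicative.ofAdd (d • v)) : Gsd M hM)) = 1 := by
    have h1 : Matrix.vecMul (Matrix.vecMul v (M - 1).adjugate) (M - 1) = d • v := by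
      rw [Matrix.vecMul_vecMul, Matrix.adjugate_mul, vecMul_smul_one]
    rw [← h1, inl_sub_commutator M hM, of_commutator_eq_one]
  have hzpow : (Abelianization.of ((SemidirectProduct.inl (Multiplicative.ofAdd v) : Gsd M hM))) ^ d = 1 := by
    rw [← map_zpow, ← map_zpow, ofAdd_zpow]
    exact key
  show IsOfFinOrder (Abelianization.of ((SemidirectProduct.inl (Multiplicative.ofAdd v) : Gsd M hM)))
  apply isOfFinOrder_iff_pow_eq_one.mpr
  refine ⟨d.natAbs, by omega, ?_⟩
  have : (Abelianization.of ((SemidirectProduct.inl (Multiplicative.ofAdd v) : Gsd M hM))) ^ ((d.natAbs : ℤ)) = 1 := by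
    rcases Int.natAbs_eq d with h | h
    · rw [← h, hzpow]
    · have : (d.natAbs : ℤ) = -d := by omega
      rw [this, _root_.zpow_neg, hzpow, inv_one]
  rw [← zpow_natCast]
  exact this

lemma gamma_gsd_eq_inl {x : Gsd M hM} (hx : x ∈ GammaSub (Gsd M hM)) :
    ∃ k, x = SemidirectProduct.inl k := by
  have hfin : IsOfFinOrder (Abelianization.of x) := hx
  have h2 : IsOfFinOrder ((Abelianization.lift (SemidirectProduct.rightHom :
      Gsd M hM →* Multiplicative ℤ)) (Abelianization.of x)) := MonoidHom.isOfFinOrder _ hfin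
  rw [Abelianization.lift_apply_of] at h2
  obtain ⟨m, hm, hpow⟩ := isOfFinOrder_iff_pow_eq_one.mp h2
  have hzero : (SemidirectProduct.rightHom x).toAdd = 0 := by
    have : ((SemidirectProduct.rightHom x) ^ m).toAdd = (0 : ℤ) := by rw [hpow]; rfl
    rw [show ((SemidirectProduct.rightHom x) ^ m).toAdd
      = m • (SemidirectProduct.rightHom x).toAdd from rfl] at this
    simpa [hm.ne'] using this
  have hone : SemidirectProduct.rightHom x = 1 := by
    have : SemidirectProduct.rightHom x = Multiplicative.ofAdd (SemidirectProduct.rightHom x).toAdd := rfl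
    rw [this, hzero]; rfl
  have : x ∈ (SemidirectProduct.inl : Multiplicative (Fin 3 → ℤ) →* Gsd M hM).range := by
    rw [SemidirectProduct.range_inl_eq_ker_rightHom]
    exact hone
  obtain ⟨k, hk⟩ := this
  exact ⟨k, hk.symm⟩

/-- the isomorphism between `G_M` and the concrete model. -/
noncomputable def iso : GM M ≃* Gsd M hM where
  toFun := Φ M hM
  invFun := Psi M hM
  left_inv := Psi_Phi M hM
  right_inv := Phi_Psi M hM
  map_mul' := _root_.map_mul _

include hM in
lemma center_eq_bot (hα : EigCond M) : Subgroup.center (GM M) = ⊥ := by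
  rw [eq_bot_iff]
  intro x hx
  have hc : ∀ y : Gsd M hM, y * Φ M hM x = Φ M hM x * y := by
    intro y
    have h := Subgroup.mem_center_iff.mp hx (Psi M hM y)
    have h2 := congrArg (Φ M hM) h
    rwa [_root_.map_mul, _root_.map_mul, Phi_Psi] at h2
  set g := Φ M hM x with hg
  have hleft : g.left = 1 := by
    have h := hc (SemidirectProduct.inr (Multiplicative.ofAdd (1:ℤ)))
    have hl := congrArg SemidirectProduct.left h
    rw [SemidirectProduct.mul_left, SemidirectProduct.mul_left] at hl
    simp only [SemidirectProduct.left_inr, SemidirectProduct.right_inr, one_mul, _root_.map_one,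
      mul_one] at hl
    -- hl : phi t g.left = g.left
    have hv : Matrix.vecMul g.left.toAdd M = g.left.toAdd := by
      have h3 : phi M hM (Multiplicative.ofAdd (1:ℤ)) (Multiplicative.ofAdd g.left.toAdd)
          = Multiplicative.ofAdd (Matrix.vecMul g.left.toAdd M) := by
        rw [phi_apply, zpow_one, Mu_val]
      rw [show (Multiplicative.ofAdd g.left.toAdd) = g.left from rfl] at h3
      have h4 := hl
      rw [h3] at h4
      exact congrArg Multiplicative.toAdd h4
    have hzero : Matrix.vecMul g.left.toAdd (M - 1) = 0 := by
      rw [Matrix.vecMul_sub, Matrix.vecMul_one, hv, sub_self]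
    have := vecMul_cancel (hyp_ne M hα) hzero
    show g.left = Multiplicative.ofAdd 0
    rw [← this]
    rfl
  have hright : g.right = 1 := by
    have hrow : ∀ w : Fin 3 → ℤ, Matrix.vecMul w
        ((Mu M hM ^ g.right.toAdd : (Matrix (Fin 3) (Fin 3) ℤ)ˣ) : Matrix (Fin 3) (Fin 3) ℤ) = w := by
      intro w
      have h := hc (SemidirectProduct.inl (Multiplicative.ofAdd w))
      have hl := congrArg SemidirectProduct.left h
      rw [SemidirectProduct.mul_left, SemidirectProduct.mul_left] at hl
      simp only [SemidirectProduct.left_inl, SemidirectProduct.right_inl, _root_.map_one, one_mul,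
        MulAut.one_apply, hleft, mul_one] at hl
      -- hl : ofAdd w * 1 = phi g.right (ofAdd w)  (or some arrangement)
      have h5 : phi M hM g.right (Multiplicative.ofAdd w) = Multiplicative.ofAdd w := by
        rw [← hl]
      have h6 : phi M hM g.right (Multiplicative.ofAdd w)
          = Multiplicative.ofAdd (Matrix.vecMul w
            ((Mu M hM ^ g.right.toAdd : (Matrix (Fin 3) (Fin 3) ℤ)ˣ) : Matrix (Fin 3) (Fin 3) ℤ)) := rfl
      rw [h6] at h5
      exact congrArg Multiplicative.toAdd h5
    have hmat : ((Mu M hM ^ g.right.toAdd : (Matrix (Fin 3) (Fin 3) ℤ)ˣ) : Matrix (Fin 3) (Fin 3) ℤ)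
        = 1 := by
      ext i j
      have := congrFun (hrow (Pi.single i 1)) j
      rw [Matrix.single_one_vecMul, Matrix.row_apply] at this
      rw [this]
      rw [Matrix.one_apply, Pi.single_apply]
      by_cases hij : i = j <;> simp [hij, eq_comm]
    have hunit : Mu M hM ^ g.right.toAdd = 1 := Units.ext (by rw [hmat, Units.val_one])
    have := Mu_pow_ne_one M hM hα hunit
    show g.right = Multiplicative.ofAdd 0
    rw [← this]
    rfl
  have hgone : g = 1 := by
    rw [show (1 : Gsd M hM) = SemidirectProduct.inl 1 from rfl,
      ← SemidirectProduct.inl_left_mul_inr_right g, hleft, hright]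
    simp
  have : x = 1 := by
    have := congrArg (Psi M hM) hgone
    rwa [Psi_Phi, _root_.map_one] at this
  simp [this]

end Main

end Stmt19

/-- For `M ∈ SL(3,ℤ)` with one real eigenvalue `α > 1` and two non-real conjugate
eigenvalues `β, β̄`: (1) the center of `G_M` is trivial; (2) `Γ_{G_M}` is the subgroup
generated by `g₁,g₂,g₃`, which is free abelian of rank 3; (3) `G_M/Γ_{G_M}` is infinite
cyclic generated by the class of `g₀`. In particular `G_M` is not isomorphic to any
group with infinite cyclic center, nor to any group `H` with `Γ_H` non-abelian. -/
theorem stmt_19 (M : Matrix (Fin 3) (Fin 3) ℤ) (hM : M.det = 1)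
    (hα : ∃ (α : ℝ) (β : ℂ), 1 < α ∧ β.im ≠ 0 ∧
      (M.map (Int.cast : ℤ → ℂ)).charpoly =
        (X - C (α : ℂ)) * (X - C β) * (X - C (starRingEnd ℂ β))) :
    -- (1)
    Subgroup.center (GM M) = ⊥ ∧
    -- (2)
    GammaSub (GM M) =
      Subgroup.closure {PresentedGroup.of 1, PresentedGroup.of 2, PresentedGroup.of 3} ∧
    Function.Injective (fun n : Fin 3 → ℤ =>
      (PresentedGroup.of 1 : GM M) ^ n 0 * PresentedGroup.of 2 ^ n 1 *
        PresentedGroup.of 3 ^ n 2) ∧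
    Set.range (fun n : Fin 3 → ℤ =>
      (PresentedGroup.of 1 : GM M) ^ n 0 * PresentedGroup.of 2 ^ n 1 *
        PresentedGroup.of 3 ^ n 2) = (GammaSub (GM M) : Set (GM M)) ∧
    (∀ x ∈ GammaSub (GM M), ∀ y ∈ GammaSub (GM M), x * y = y * x) ∧
    -- (3)
    Subgroup.zpowers (QuotientGroup.mk' (GammaSub (GM M)) (PresentedGroup.of 0)) = ⊤ ∧
    ¬ IsOfFinOrder (QuotientGroup.mk' (GammaSub (GM M)) (PresentedGroup.of 0)) ∧
    -- in particular
    (∀ (H : Type) [Group H], Nonempty (GM M ≃* H) →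
      (¬ ∃ h : H, ¬ IsOfFinOrder h ∧ Subgroup.center H = Subgroup.zpowers h) ∧
      (∀ x ∈ GammaSub H, ∀ y ∈ GammaSub H, x * y = y * x)) := by
  have hα' : Stmt19.EigCond M := hα
  have hcenter : Subgroup.center (GM M) = ⊥ := Stmt19.center_eq_bot M hM hα'
  have hmemiff : ∀ x : GM M, x ∈ GammaSub (GM M) ↔
      Stmt19.Φ M hM x ∈ GammaSub (Stmt19.Gsd M hM) :=
    fun x => Stmt19.gamma_iff (Stmt19.iso M hM) x
  have hofmem : ∀ v : Fin 3 → ℤ,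
      Stmt19.psiK M (Multiplicative.ofAdd v) ∈ GammaSub (GM M) := by
    intro v
    rw [hmemiff, Stmt19.Phi_psiK]
    exact Stmt19.inl_mem_gamma M hM hα' v
  have hdecomp : ∀ x ∈ GammaSub (GM M), ∃ v : Fin 3 → ℤ,
      x = Stmt19.psiK M (Multiplicative.ofAdd v) := by
    intro x hx
    obtain ⟨k, hk⟩ := Stmt19.gamma_gsd_eq_inl M hM ((hmemiff x).mp hx)
    refine ⟨k.toAdd, ?_⟩
    have h2 := congrArg (Stmt19.Psi M hM) hk
    rw [Stmt19.Psi_Phi, Stmt19.Psi_inl] at h2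
    exact h2
  have hcommγ : ∀ x ∈ GammaSub (GM M), ∀ y ∈ GammaSub (GM M), x * y = y * x := by
    intro x hx y hy
    obtain ⟨v, hv⟩ := hdecomp x hx
    obtain ⟨w, hw⟩ := hdecomp y hy
    have hmc : Multiplicative.ofAdd v * Multiplicative.ofAdd w
        = Multiplicative.ofAdd w * Multiplicative.ofAdd v := mul_comm _ _
    rw [hv, hw, ← _root_.map_mul (Stmt19.psiK M), ← _root_.map_mul (Stmt19.psiK M), hmc]
  refine ⟨hcenter, ?_, ?_, ?_, hcommγ, ?_, ?_, ?_⟩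
  · -- GammaSub = closure
    apply le_antisymm
    · intro x hx
      obtain ⟨v, hv⟩ := hdecomp x hx
      rw [hv, Stmt19.psiK_apply]
      have h1 : (PresentedGroup.of 1 : GM M) ∈
          Subgroup.closure {PresentedGroup.of 1, PresentedGroup.of 2, PresentedGroup.of 3} :=
        Subgroup.subset_closure (Set.mem_insert _ _)
      have h2 : (PresentedGroup.of 2 : GM M) ∈
          Subgroup.closure {PresentedGroup.of 1, PresentedGroup.of 2, PresentedGroup.of 3} :=
        Subgroup.subset_closure (Set.mem_insert_of_mem _ (Set.mem_insert _ _))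
      have h3 : (PresentedGroup.of 3 : GM M) ∈
          Subgroup.closure {PresentedGroup.of 1, PresentedGroup.of 2, PresentedGroup.of 3} :=
        Subgroup.subset_closure (Set.mem_insert_of_mem _ (Set.mem_insert_of_mem _ rfl))
      exact Subgroup.mul_mem _ (Subgroup.mul_mem _ (Subgroup.zpow_mem _ h1 _)
        (Subgroup.zpow_mem _ h2 _)) (Subgroup.zpow_mem _ h3 _)
    · rw [Subgroup.closure_le]
      intro y hy
      simp only [Set.mem_insert_iff, Set.mem_singleton_iff] at hy
      rcases hy with rfl | rfl | rfl
      · show (PresentedGroup.of 1 : GM M) ∈ GammaSub (GM M)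
        rw [hmemiff, Stmt19.Φ_of,
          show Stmt19.gens M hM 1 = SemidirectProduct.inl (Multiplicative.ofAdd (Pi.single 0 1)) from rfl]
        exact Stmt19.inl_mem_gamma M hM hα' _
      · show (PresentedGroup.of 2 : GM M) ∈ GammaSub (GM M)
        rw [hmemiff, Stmt19.Φ_of,
          show Stmt19.gens M hM 2 = SemidirectProduct.inl (Multiplicative.ofAdd (Pi.single 1 1)) from rfl]
        exact Stmt19.inl_mem_gamma M hM hα' _
      · show (PresentedGroup.of 3 : GM M) ∈ GammaSub (GM M)
        rw [hmemiff, Stmt19.Φ_of,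
          show Stmt19.gens M hM 3 = SemidirectProduct.inl (Multiplicative.ofAdd (Pi.single 2 1)) from rfl]
        exact Stmt19.inl_mem_gamma M hM hα' _
  · -- injectivity
    intro n m h
    have h2 : SemidirectProduct.inl (Multiplicative.ofAdd n)
        = (SemidirectProduct.inl (Multiplicative.ofAdd m) : Stmt19.Gsd M hM) := by
      rw [← Stmt19.Phi_psiK M hM n, ← Stmt19.Phi_psiK M hM m]
      exact congrArg (Stmt19.Φ M hM) h
    have h3 := SemidirectProduct.inl_injective h2
    exact Multiplicative.ofAdd.injective h3
  · -- range = GammaSub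
    ext x
    constructor
    · rintro ⟨n, rfl⟩
      exact hofmem n
    · intro hx
      obtain ⟨v, hv⟩ := hdecomp x hx
      exact ⟨v, hv.symm⟩
  · -- zpowers = ⊤
    rw [Subgroup.eq_top_iff']
    intro q
    induction q using QuotientGroup.induction_on with
    | H x =>
      have hx : x = Stmt19.psiK M ((Stmt19.Φ M hM x).left)
          * (PresentedGroup.of 0 : GM M) ^ ((Stmt19.Φ M hM x).right.toAdd) := by
        have h1 := Stmt19.Psi_Phi M hM x
        rw [← SemidirectProduct.inl_left_mul_inr_right (Stmt19.Φ M hM x), _root_.map_mul,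
          Stmt19.Psi_inl, Stmt19.Psi_inr] at h1
        exact h1.symm
      have h9 : QuotientGroup.mk' (GammaSub (GM M))
          (Stmt19.psiK M ((Stmt19.Φ M hM x).left)) = 1 :=
        (QuotientGroup.eq_one_iff _).mpr (hofmem ((Stmt19.Φ M hM x).left.toAdd))
      have key : QuotientGroup.mk' (GammaSub (GM M)) x
          = (QuotientGroup.mk' (GammaSub (GM M)) (PresentedGroup.of 0))
              ^ ((Stmt19.Φ M hM x).right.toAdd) := by
        conv_lhs => rw [hx]
        rw [_root_.map_mul, map_zpow, h9, one_mul]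
      exact Subgroup.mem_zpowers_iff.mpr ⟨(Stmt19.Φ M hM x).right.toAdd, key.symm⟩
  · -- not finite order
    intro h
    obtain ⟨m, hm, hpow⟩ := isOfFinOrder_iff_pow_eq_one.mp h
    have hmem : (PresentedGroup.of 0 : GM M) ^ m ∈ GammaSub (GM M) := by
      apply (QuotientGroup.eq_one_iff _).mp
      rw [← map_pow] at hpow
      exact hpow
    obtain ⟨k, hk⟩ := Stmt19.gamma_gsd_eq_inl M hM ((hmemiff _).mp hmem)
    have h2 := congrArg SemidirectProduct.rightHom hk
    rw [map_pow, Stmt19.Φ_of] at h2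
    rw [show Stmt19.gens M hM 0 = SemidirectProduct.inr (Multiplicative.ofAdd (1:ℤ)) from rfl] at h2
    rw [← map_pow, SemidirectProduct.rightHom_inr, SemidirectProduct.rightHom_inl] at h2
    have h3 := congrArg Multiplicative.toAdd h2
    rw [show ((Multiplicative.ofAdd (1:ℤ)) ^ m).toAdd = (m : ℤ) • (1:ℤ) from rfl] at h3
    simp only [smul_eq_mul, mul_one] at h3
    rw [show Multiplicative.toAdd (1 : Multiplicative ℤ) = 0 from rfl] at h3
    omega
  · -- transport to H
    intro H _ hne
    obtain ⟨e'⟩ := hne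
    constructor
    · rintro ⟨h, hord, hcen⟩
      have hh : h ∈ Subgroup.center H := by rw [hcen]; exact Subgroup.mem_zpowers h
      have hsym : e'.symm h ∈ Subgroup.center (GM M) := by
        apply Subgroup.mem_center_iff.mpr
        intro g
        have h4 := Subgroup.mem_center_iff.mp hh (e' g)
        have h5 := congrArg e'.symm h4
        simpa [_root_.map_mul] using h5
      rw [hcenter, Subgroup.mem_bot] at hsym
      have : h = 1 := by
        have := congrArg e' hsym
        simpa using this
      rw [this] at hord
      exact hord IsOfFinOrder.one
    · intro x hx y hy
      have hx' : e'.symm x ∈ GammaSub (GM M) := (Stmt19.gamma_iff e'.symm x).mp hx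
      have hy' : e'.symm y ∈ GammaSub (GM M) := (Stmt19.gamma_iff e'.symm y).mp hy
      have hc := hcommγ _ hx' _ hy'
      have h6 := congrArg e' hc
      simpa [_root_.map_mul] using h6
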